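/- Let C and D be two disjoint nonempty subsets of {1,…,N}, and let Z_{CD} = { r ∈ X : r_i = u for all i ∈ C, r_i = w for all i ∈ D, r_i = 0 for i ∉ C ∪ D, where u,w ∈ ℝ^ν satisfy M_C u + M_D w = 0 }. Then Z_{CD} is a ν-dimensional linear subspace of X, and for every r ∈ X the squared norm of the orthogonal projection of r onto Z_{CD} equals (M_C M_D/(M_C + M_D)) |R_C(r) − R_D(r)|_e², where |·|_e is the Euclidean norm on ℝ^ν. In particular, for singletons C = {i}, D = {j} this equals (m_i m_j/(m_i + m_j)) |r_i − r_j|_e². -/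

import Mathlib

open scoped BigOperators

noncomputable section

/-- The one-particle space `ℝ^ν`. -/
abbrev Vec (ν : ℕ) := EuclideanSpace ℝ (Fin ν)

/-- Configurations of `N` particles in `ℝ^ν`. -/
abbrev Conf (N ν : ℕ) := Fin N → Vec ν

/-- The mass inner product `⟨r,s⟩ = Σ m_i (r_i · s_i)`. -/
def minner {N ν : ℕ} (m : Fin N → ℝ) (r s : Conf N ν) : ℝ :=
  ∑ i, m i * (inner ℝ (r i) (s i) : ℝ)

/-- The total mass `M_C = Σ_{i∈C} m_i` of a subset `C`. -/
def Mtot {N : ℕ} (m : Fin N → ℝ) (C : Finset (Fin N)) : ℝ := ∑ i ∈ C, m i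

/-- The weighted center `R_C(r) = M_C⁻¹ Σ_{i∈C} m_i r_i`. -/
def Rctr {N ν : ℕ} (m : Fin N → ℝ) (C : Finset (Fin N)) (r : Conf N ν) : Vec ν :=
  (Mtot m C)⁻¹ • ∑ i ∈ C, m i • r i

/-- The set `Z_{CD}`: configurations equal to `u` on `C`, `w` on `D`, `0` elsewhere,
with `M_C u + M_D w = 0`. -/
def Zcd {N ν : ℕ} (m : Fin N → ℝ) (C D : Finset (Fin N)) : Set (Conf N ν) :=
  {r | ∃ u w : Vec ν, Mtot m C • u + Mtot m D • w = 0 ∧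
        ∀ i, r i = if i ∈ C then u else if i ∈ D then w else 0}

lemma sum_ite_smul {N ν : ℕ} (g : Fin N → ℝ) {C D : Finset (Fin N)} (hCD : Disjoint C D)
    (u w : Vec ν) :
    ∑ i, g i • (if i ∈ C then u else if i ∈ D then w else 0) =
      (∑ i ∈ C, g i) • u + (∑ i ∈ D, g i) • w := by
  have h : ∀ i : Fin N,
      g i • (if i ∈ C then u else if i ∈ D then w else 0) =
        (if i ∈ C then g i else 0) • u + (if i ∈ D then g i else 0) • w := by
    intro i
    by_cases hiC : i ∈ C
    · have hiD : i ∉ D := fun hd => (Finset.disjoint_left.mp hCD hiC hd)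
      simp [hiC, hiD]
    · by_cases hiD : i ∈ D <;> simp [hiC, hiD]
  simp_rw [h]
  rw [Finset.sum_add_distrib, ← Finset.sum_smul, ← Finset.sum_smul,
    Finset.sum_ite_mem, Finset.sum_ite_mem, Finset.univ_inter, Finset.univ_inter]

lemma minner_ite {N ν : ℕ} (m : Fin N → ℝ) {C D : Finset (Fin N)} (hCD : Disjoint C D)
    (r : Conf N ν) (u w : Vec ν) :
    minner m r (fun i => if i ∈ C then u else if i ∈ D then w else 0) =
      (inner ℝ (∑ i ∈ C, m i • r i) u : ℝ) + (inner ℝ (∑ i ∈ D, m i • r i) w : ℝ) := by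
  unfold minner
  have h : ∀ i : Fin N,
      m i * (inner ℝ (r i) (if i ∈ C then u else if i ∈ D then w else 0) : ℝ) =
        (inner ℝ ((if i ∈ C then m i • r i else 0) : Vec ν) u : ℝ) +
          (inner ℝ ((if i ∈ D then m i • r i else 0) : Vec ν) w : ℝ) := by
    intro i
    by_cases hiC : i ∈ C
    · have hiD : i ∉ D := fun hd => (Finset.disjoint_left.mp hCD hiC hd)
      simp [hiC, hiD, real_inner_smul_left, Finset.mul_sum, mul_assoc]
    · by_cases hiD : i ∈ D <;> simp [hiC, hiD, real_inner_smul_left, Finset.mul_sum, mul_assoc]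
  simp_rw [h]
  rw [Finset.sum_add_distrib, ← sum_inner, ← sum_inner,
    Finset.sum_ite_mem, Finset.sum_ite_mem, Finset.univ_inter, Finset.univ_inter]

/-- Parametrization of `Zcd` by the vector `u`. -/
def Lmap {N : ℕ} (ν : ℕ) (m : Fin N → ℝ) (C D : Finset (Fin N)) : Vec ν →ₗ[ℝ] Conf N ν where
  toFun v := fun i => if i ∈ C then v else if i ∈ D then (-(Mtot m C / Mtot m D)) • v else 0
  map_add' x y := by
    funext i
    by_cases hiC : i ∈ C
    · simp [hiC]
    · by_cases hiD : i ∈ D <;> simp [hiC, hiD, smul_add]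
  map_smul' c x := by
    funext i
    by_cases hiC : i ∈ C
    · simp [hiC]
    · by_cases hiD : i ∈ D <;> simp [hiC, hiD, smul_smul, mul_comm]

lemma range_Lmap {N ν : ℕ} (m : Fin N → ℝ) (hm : ∀ i, 0 < m i) {C D : Finset (Fin N)}
    (hC : C.Nonempty) (hD : D.Nonempty) (hCD : Disjoint C D) :
    (LinearMap.range (Lmap ν m C D) : Set (Conf N ν)) = Zcd m C D := by
  have hMC : (0:ℝ) < Mtot m C := Finset.sum_pos (fun i _ => hm i) hC
  have hMD : (0:ℝ) < Mtot m D := Finset.sum_pos (fun i _ => hm i) hD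
  ext r
  simp only [SetLike.mem_coe, LinearMap.mem_range]
  constructor
  · rintro ⟨v, rfl⟩
    refine ⟨v, (-(Mtot m C / Mtot m D)) • v, ?_, fun i => rfl⟩
    rw [smul_smul, ← add_smul]
    have : Mtot m C + Mtot m D * -(Mtot m C / Mtot m D) = 0 := by
      field_simp
      ring
    rw [this, zero_smul]
  · rintro ⟨u, w, hcon, hall⟩
    have hw : w = (-(Mtot m C / Mtot m D)) • u := by
      have h1 : Mtot m D • w = -(Mtot m C • u) := eq_neg_of_add_eq_zero_right hcon
      have h2 := congrArg (fun x : Vec ν => (Mtot m D)⁻¹ • x) h1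
      simp only [smul_smul, inv_mul_cancel₀ hMD.ne', one_smul, smul_neg] at h2
      rw [h2, neg_smul, div_eq_inv_mul]
    refine ⟨u, ?_⟩
    funext i
    rw [hall i]
    show (if i ∈ C then u else if i ∈ D then (-(Mtot m C / Mtot m D)) • u else 0) = _
    by_cases hiC : i ∈ C
    · simp [hiC]
    · by_cases hiD : i ∈ D <;> simp [hiC, hiD, hw]

lemma finrank_Zcd {N ν : ℕ} (m : Fin N → ℝ) {C D : Finset (Fin N)} (hC : C.Nonempty) :
    Module.finrank ℝ (LinearMap.range (Lmap (N := N) ν m C D)) = ν := by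
  obtain ⟨i, hi⟩ := hC
  have hinj : Function.Injective (Lmap (N := N) ν m C D) := by
    intro v₁ v₂ h
    have := congrFun h i
    simpa [Lmap, hi] using this
  rw [LinearMap.finrank_range_of_inj hinj, finrank_euclideanSpace_fin]

lemma proj_lemma {N ν : ℕ} (m : Fin N → ℝ) (hm : ∀ i, 0 < m i)
    {C D : Finset (Fin N)} (hC : C.Nonempty) (hD : D.Nonempty) (hCD : Disjoint C D)
    (r : Conf N ν) :
    ∃ z ∈ Zcd m C D, (∀ w ∈ Zcd m C D, minner m (r - z) w = 0) ∧
      minner m z z = (Mtot m C * Mtot m D / (Mtot m C + Mtot m D)) *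
        ‖Rctr m C r - Rctr m D r‖ ^ 2 := by
  have hMC : (0:ℝ) < Mtot m C := Finset.sum_pos (fun i _ => hm i) hC
  have hMD : (0:ℝ) < Mtot m D := Finset.sum_pos (fun i _ => hm i) hD
  have hS : Mtot m C + Mtot m D ≠ 0 := by positivity
  set MC := Mtot m C with hMCdef
  set MD := Mtot m D with hMDdef
  set RC := Rctr m C r with hRCdef
  set RD := Rctr m D r with hRDdef
  set d : Vec ν := RC - RD with hddef
  set u : Vec ν := (MD / (MC + MD)) • d with hudef
  set w : Vec ν := (-(MC / (MC + MD))) • d with hwdef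
  set z : Conf N ν := fun i => if i ∈ C then u else if i ∈ D then w else 0 with hzdef
  have hcon : MC • u + MD • w = 0 := by
    rw [hudef, hwdef, smul_smul, smul_smul, ← add_smul]
    have : MC * (MD / (MC + MD)) + MD * -(MC / (MC + MD)) = 0 := by ring
    rw [this, zero_smul]
  have hzmem : z ∈ Zcd m C D := ⟨u, w, hcon, fun i => rfl⟩
  have hsumC : ∑ i ∈ C, m i • r i = MC • RC := by
    rw [hRCdef, Rctr, smul_smul, mul_inv_cancel₀ hMC.ne', one_smul]
  have hsumD : ∑ i ∈ D, m i • r i = MD • RD := by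
    rw [hRDdef, Rctr, smul_smul, mul_inv_cancel₀ hMD.ne', one_smul]
  have hzC : ∑ i ∈ C, m i • z i = MC • u := by
    have h : ∀ i ∈ C, m i • z i = m i • u := by
      intro i hi; rw [hzdef]; simp [hi]
    rw [Finset.sum_congr rfl h, ← Finset.sum_smul, hMCdef, Mtot]
  have hzD : ∑ i ∈ D, m i • z i = MD • w := by
    have : ∀ i ∈ D, m i • z i = m i • w := by
      intro i hi
      have hiC : i ∉ C := fun hc => Finset.disjoint_left.mp hCD hc hi
      rw [hzdef]; simp [hi, hiC]
    rw [Finset.sum_congr rfl this, ← Finset.sum_smul, hMDdef, Mtot]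
  refine ⟨z, hzmem, ?_, ?_⟩
  · rintro ω ⟨u', w', hcon', hall'⟩
    have hωeq : ω = fun i => if i ∈ C then u' else if i ∈ D then w' else 0 := funext hall'
    rw [hωeq, minner_ite m hCD]
    have hC' : ∑ i ∈ C, m i • (r - z) i = MC • RC - MC • u := by
      simp only [Pi.sub_apply, smul_sub, Finset.sum_sub_distrib, hsumC, hzC]
    have hD' : ∑ i ∈ D, m i • (r - z) i = MD • RD - MD • w := by
      simp only [Pi.sub_apply, smul_sub, Finset.sum_sub_distrib, hsumD, hzD]
    rw [hC', hD']
    have hw' : w' = (-(MC / MD)) • u' := by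
      have h1 : MD • w' = -(MC • u') := eq_neg_of_add_eq_zero_right hcon'
      have h2 := congrArg (fun x : Vec ν => (MD)⁻¹ • x) h1
      simp only [smul_smul, inv_mul_cancel₀ hMD.ne', one_smul, smul_neg] at h2
      rw [h2, neg_smul, div_eq_inv_mul]
    rw [hw', hudef, hwdef, hddef]
    simp only [inner_sub_left, inner_sub_right, real_inner_smul_left, real_inner_smul_right,
      inner_neg_left, inner_neg_right, neg_smul, smul_sub, smul_smul]
    field_simp
    ring
  · have : minner m z z = (inner ℝ (∑ i ∈ C, m i • z i) u : ℝ) + (inner ℝ (∑ i ∈ D, m i • z i) w : ℝ) := by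
      rw [hzdef, minner_ite m hCD]
    rw [this, hzC, hzD, hudef, hwdef]
    simp only [real_inner_smul_left, real_inner_smul_right, smul_smul,
      real_inner_self_eq_norm_sq]
    field_simp
    ring

/-- `Z_{CD}` is a `ν`-dimensional linear subspace of `X`, and for every `r ∈ X`
the squared norm of the orthogonal projection of `r` onto `Z_{CD}` equals
`(M_C M_D/(M_C+M_D)) |R_C(r) − R_D(r)|²`; in particular for singletons `C = {i}`, `D = {j}`
it equals `(m_i m_j/(m_i+m_j)) |r_i − r_j|²`. -/
theorem stmt1 {N ν : ℕ} (hN : 2 ≤ N) (hν : 1 ≤ ν) (m : Fin N → ℝ) (hm : ∀ i, 0 < m i)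
    (C D : Finset (Fin N)) (hC : C.Nonempty) (hD : D.Nonempty) (hCD : Disjoint C D) :
    (∃ Z : Submodule ℝ (Conf N ν), (Z : Set (Conf N ν)) = Zcd m C D ∧
        Module.finrank ℝ Z = ν) ∧
    (∀ r ∈ Zcd (ν := ν) m C D, ∑ i, m i • r i = 0) ∧
    (∀ r : Conf N ν, (∑ i, m i • r i = 0) →
      ∃ z ∈ Zcd m C D, (∀ w ∈ Zcd m C D, minner m (r - z) w = 0) ∧
        minner m z z =
          (Mtot m C * Mtot m D / (Mtot m C + Mtot m D)) * ‖Rctr m C r - Rctr m D r‖ ^ 2) ∧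
    (∀ i j : Fin N, i ≠ j → ∀ r : Conf N ν, (∑ k, m k • r k = 0) →
      ∃ z ∈ Zcd m {i} {j}, (∀ w ∈ Zcd m {i} {j}, minner m (r - z) w = 0) ∧
        minner m z z = (m i * m j / (m i + m j)) * ‖r i - r j‖ ^ 2) := by
  refine ⟨⟨LinearMap.range (Lmap ν m C D), range_Lmap m hm hC hD hCD, finrank_Zcd m hC⟩,
    ?_, ?_, ?_⟩
  · rintro r ⟨u, w, hcon, hall⟩
    have : ∀ i : Fin N, m i • r i = m i • (if i ∈ C then u else if i ∈ D then w else 0) := by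
      intro i; rw [hall i]
    rw [Finset.sum_congr rfl (fun i _ => this i), sum_ite_smul m hCD]
    exact hcon
  · intro r _
    exact proj_lemma m hm hC hD hCD r
  · intro i j hij r _
    have hdisj : Disjoint ({i} : Finset (Fin N)) {j} := by
      simp [Finset.disjoint_singleton, hij, hij.symm]
    obtain ⟨z, hz, horth, hnorm⟩ :=
      proj_lemma m hm (Finset.singleton_nonempty i) (Finset.singleton_nonempty j) hdisj r
    refine ⟨z, hz, horth, ?_⟩
    rw [hnorm]
    have hMi : Mtot m {i} = m i := Finset.sum_singleton _ _
    have hMj : Mtot m {j} = m j := Finset.sum_singleton _ _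
    have hRi : Rctr m {i} r = r i := by
      rw [Rctr, hMi, Finset.sum_singleton, smul_smul, inv_mul_cancel₀ (hm i).ne', one_smul]
    have hRj : Rctr m {j} r = r j := by
      rw [Rctr, hMj, Finset.sum_singleton, smul_smul, inv_mul_cancel₀ (hm j).ne', one_smul]
    rw [hMi, hMj, hRi, hRj]
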